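/- Let φ̃ : ℝ × ℝ → ℝ be continuously differentiable and define P : ℝ × ℝ → ℝ² by P(r,θ) = (r·cos(φ̃(r,θ) − θ), sin(φ̃(r,θ) − θ)). Suppose P(0,θ₀) = 0 (equivalently sin(φ̃(0,θ₀) − θ₀) = 0) and ∂_r φ̃(0,θ₀) = 0. Then the Jacobian matrix of P at (0,θ₀) equals cos(φ̃(0,θ₀) − θ₀) · [[1, 0], [0, ∂_θ φ̃(0,θ₀) − 1]], where cos(φ̃(0,θ₀) − θ₀) = ±1; in particular det DP(0,θ₀) = ∂_θ φ̃(0,θ₀) − 1, so that the singularity (0,θ₀) of P is a hyperbolic saddle (eigenvalues of opposite signs) if ∂_θ φ̃(0,θ₀) < 1 and a node (two real eigenvalues of the same sign) if ∂_θ φ̃(0,θ₀) > 1. -/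

import Mathlib

open Real

lemma blowup_sign_aux (c d : ℝ) (hc1 : c = 1 ∨ c = -1) :
    c * (c * (d - 1)) = d - 1 ∧
    (d < 1 → (0 < c ∧ c * (d - 1) < 0) ∨ (c < 0 ∧ 0 < c * (d - 1))) ∧
    (1 < d → (0 < c ∧ 0 < c * (d - 1)) ∨ (c < 0 ∧ c * (d - 1) < 0)) := by
  rcases hc1 with h | h <;> subst h <;>
    refine ⟨by ring, fun hd => ?_, fun hd => ?_⟩
  · left; constructor <;> nlinarith
  · left; constructor <;> nlinarith
  · right; constructor <;> nlinarith
  · right; constructor <;> nlinarith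

/-- the Jacobian of the blown-up vector field
`P(r,θ) = (r cos(φ̃(r,θ) − θ), sin(φ̃(r,θ) − θ))` at a singularity `(0,θ₀)` with
`∂_r φ̃(0,θ₀) = 0` is `cos(φ̃(0,θ₀) − θ₀) · diag(1, ∂_θ φ̃(0,θ₀) − 1)` with
`cos(φ̃(0,θ₀) − θ₀) = ±1`; its determinant is `∂_θ φ̃(0,θ₀) − 1`, so the
singularity is a saddle if `∂_θ φ̃(0,θ₀) < 1` and a node if `∂_θ φ̃(0,θ₀) > 1`. -/
theorem blowup_jacobian_at_singularity (phi : ℝ × ℝ → ℝ) (hphi : ContDiff ℝ 1 phi)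
    (P : ℝ × ℝ → ℝ × ℝ)
    (hP : ∀ p : ℝ × ℝ, P p = (p.1 * cos (phi p - p.2), sin (phi p - p.2)))
    (θ₀ : ℝ)
    (hsing : sin (phi (0, θ₀) - θ₀) = 0)
    (hr : fderiv ℝ phi (0, θ₀) (1, 0) = 0)
    (c d : ℝ)
    (hc : c = cos (phi (0, θ₀) - θ₀))
    (hd : d = fderiv ℝ phi (0, θ₀) (0, 1)) :
    (c = 1 ∨ c = -1) ∧
    fderiv ℝ P (0, θ₀) (1, 0) = (c, 0) ∧
    fderiv ℝ P (0, θ₀) (0, 1) = (0, c * (d - 1)) ∧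
    -- the determinant of the Jacobian is ∂_θ φ̃(0,θ₀) − 1
    c * (c * (d - 1)) = d - 1 ∧
    -- saddle: eigenvalues c and c(d−1) of opposite signs when d < 1
    (d < 1 → (0 < c ∧ c * (d - 1) < 0) ∨ (c < 0 ∧ 0 < c * (d - 1))) ∧
    -- node: eigenvalues c and c(d−1) of the same sign when d > 1
    (1 < d → (0 < c ∧ 0 < c * (d - 1)) ∨ (c < 0 ∧ c * (d - 1) < 0)) := by
  have hPeq : P = fun p : ℝ × ℝ => (p.1 * cos (phi p - p.2), sin (phi p - p.2)) :=
    funext hP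
  have hc1 : c = 1 ∨ c = -1 := by
    apply mul_self_eq_one_iff.mp
    have := sin_sq_add_cos_sq (phi (0, θ₀) - θ₀)
    rw [hsing, hc] at *
    nlinarith [this]
  have haux := blowup_sign_aux c d hc1
  set L : ℝ × ℝ →L[ℝ] ℝ := fderiv ℝ phi (0, θ₀) with hL
  have hphi' : HasFDerivAt phi L (0, θ₀) :=
    (hphi.differentiable one_ne_zero (0, θ₀)).hasFDerivAt
  have hg : HasFDerivAt (fun p : ℝ × ℝ => phi p - p.2)
      (L - ContinuousLinearMap.snd ℝ ℝ ℝ) (0, θ₀) := hphi'.sub hasFDerivAt_snd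
  have hga : phi ((0 : ℝ), θ₀) - ((0 : ℝ), θ₀).2 = phi (0, θ₀) - θ₀ := rfl
  have hcos : HasFDerivAt (fun p : ℝ × ℝ => cos (phi p - p.2))
      ((-sin (phi (0, θ₀) - θ₀)) • (L - ContinuousLinearMap.snd ℝ ℝ ℝ)) (0, θ₀) := hg.cos
  have hsin : HasFDerivAt (fun p : ℝ × ℝ => sin (phi p - p.2))
      ((cos (phi (0, θ₀) - θ₀)) • (L - ContinuousLinearMap.snd ℝ ℝ ℝ)) (0, θ₀) := hg.sin
  have h1 : HasFDerivAt (fun p : ℝ × ℝ => p.1 * cos (phi p - p.2))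
      (((0 : ℝ), θ₀).1 • ((-sin (phi (0, θ₀) - θ₀)) • (L - ContinuousLinearMap.snd ℝ ℝ ℝ)) +
        cos (phi (0, θ₀) - θ₀) • ContinuousLinearMap.fst ℝ ℝ ℝ) (0, θ₀) :=
    hasFDerivAt_fst.mul hcos
  have hder : HasFDerivAt P
      ((((0 : ℝ), θ₀).1 • ((-sin (phi (0, θ₀) - θ₀)) • (L - ContinuousLinearMap.snd ℝ ℝ ℝ)) +
        cos (phi (0, θ₀) - θ₀) • ContinuousLinearMap.fst ℝ ℝ ℝ).prod
       ((cos (phi (0, θ₀) - θ₀)) • (L - ContinuousLinearMap.snd ℝ ℝ ℝ))) (0, θ₀) := by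
    rw [hPeq]; exact HasFDerivAt.prodMk h1 hsin
  have hfd := hder.fderiv
  refine ⟨hc1, ?_, ?_, haux.1, haux.2.1, haux.2.2⟩
  · rw [hfd]
    simp only [ContinuousLinearMap.prod_apply, ContinuousLinearMap.add_apply,
      ContinuousLinearMap.smul_apply, ContinuousLinearMap.sub_apply,
      ContinuousLinearMap.coe_fst', ContinuousLinearMap.coe_snd']
    rw [hsing]
    simp [← hL, hr, ← hc]
  · rw [hfd]
    simp only [ContinuousLinearMap.prod_apply, ContinuousLinearMap.add_apply,
      ContinuousLinearMap.smul_apply, ContinuousLinearMap.sub_apply,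
      ContinuousLinearMap.coe_fst', ContinuousLinearMap.coe_snd']
    rw [hsing]
    simp [← hL, ← hd, ← hc]
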